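/- For every finite abstract merge tree S there exists an abstract merge tree R(S) such that S is a.e. isomorphic to R(S) and R(S) is regular; moreover R(S) is unique up to (natural) isomorphism. -/

import Mathlib

open MeasureTheory

/-- A persistent set: a functor from the poset `(ℝ, ≤)` to `Sets`. -/
structure PersistentSet where
  obj : ℝ → Type
  map : ∀ {s t : ℝ}, s ≤ t → obj s → obj t
  map_id : ∀ (t : ℝ) (x : obj t), map le_rfl x = x
  map_comp : ∀ {s t u : ℝ} (h₁ : s ≤ t) (h₂ : t ≤ u) (x : obj s),
    map h₂ (map h₁ x) = map (h₁.trans h₂) x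

/-- `C` witnesses that `S` is an abstract merge tree: empty below all critical values,
a singleton above all critical values, and bijective transition maps away from `C`. -/
def IsMergeTreeCriticalSet (S : PersistentSet) (C : Finset ℝ) : Prop :=
  (∀ t : ℝ, (∀ c ∈ C, t < c) → IsEmpty (S.obj t)) ∧
  (∀ t : ℝ, (∀ c ∈ C, c < t) → ∃ x : S.obj t, ∀ y : S.obj t, y = x) ∧
  (∀ (s t : ℝ) (h : s ≤ t), (∀ c ∈ C, c < s ∨ t < c) → Function.Bijective (S.map h))

/-- A (finite) abstract merge tree. -/
def IsAbstractMergeTree (S : PersistentSet) : Prop :=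
  (∀ t : ℝ, Finite (S.obj t)) ∧ ∃ C : Finset ℝ, IsMergeTreeCriticalSet S C

/-- `S` is regular: all topological changes happen *at* the critical values, i.e. the
transition maps are bijective on small intervals to the right of every point. -/
def RegularPS (S : PersistentSet) : Prop :=
  ∀ t : ℝ, ∃ ε > (0 : ℝ), ∀ (t' : ℝ) (h : t ≤ t'), t' < t + ε → Function.Bijective (S.map h)

/-- Natural isomorphism of persistent sets. -/
def PSIso (S S' : PersistentSet) : Prop :=
  ∃ α : ∀ t : ℝ, S.obj t ≃ S'.obj t,
    ∀ (s t : ℝ) (h : s ≤ t) (x : S.obj s), α t (S.map h x) = S'.map h (α s x)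

/-- Almost everywhere isomorphism of persistent sets. -/
def AEIso (S S' : PersistentSet) : Prop :=
  ∃ Z : Set ℝ, MeasurableSet Z ∧ volume Zᶜ = 0 ∧
    ∃ α : ∀ t : ℝ, t ∈ Z → (S.obj t ≃ S'.obj t),
      ∀ (s t : ℝ) (hs : s ∈ Z) (ht : t ∈ Z) (h : s ≤ t) (x : S.obj s),
        α t ht (S.map h x) = S'.map h (α s hs x)

noncomputable def nextHalf (C : Finset ℝ) (t : ℝ) : ℝ :=
  if h : (C.filter (fun c => t < c)).Nonempty then
    (t + (C.filter (fun c => t < c)).min' h) / 2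
  else t + 1

lemma lt_nextHalf (C : Finset ℝ) (t : ℝ) : t < nextHalf C t := by
  unfold nextHalf
  split_ifs with h
  · have := Finset.min'_mem _ h
    have ht : t < (C.filter (fun c => t < c)).min' h := (Finset.mem_filter.mp this).2
    linarith
  · linarith

lemma nextHalf_spec (C : Finset ℝ) (t : ℝ) {c : ℝ} (hc : c ∈ C) :
    c ≤ t ∨ nextHalf C t < c := by
  rcases le_or_gt c t with h | h
  · exact Or.inl h
  · right
    unfold nextHalf
    have hmem : c ∈ C.filter (fun c => t < c) := Finset.mem_filter.mpr ⟨hc, h⟩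
    have hne : (C.filter (fun c => t < c)).Nonempty := ⟨c, hmem⟩
    rw [dif_pos hne]
    have h1 : (C.filter (fun c => t < c)).min' hne ≤ c := Finset.min'_le _ _ hmem
    have h2 : t < (C.filter (fun c => t < c)).min' hne :=
      (Finset.mem_filter.mp (Finset.min'_mem _ hne)).2
    linarith

lemma nextHalf_mono (C : Finset ℝ) : Monotone (nextHalf C) := by
  intro s t hst
  unfold nextHalf
  by_cases ht : (C.filter (fun c => t < c)).Nonempty
  · rw [dif_pos ht]
    have hmt := Finset.mem_filter.mp (Finset.min'_mem _ ht)
    have hs : (C.filter (fun c => s < c)).Nonempty :=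
      ⟨_, Finset.mem_filter.mpr ⟨hmt.1, lt_of_le_of_lt hst hmt.2⟩⟩
    rw [dif_pos hs]
    have hle : (C.filter (fun c => s < c)).min' hs ≤ (C.filter (fun c => t < c)).min' ht :=
      Finset.min'_le _ _ (Finset.mem_filter.mpr ⟨hmt.1, lt_of_le_of_lt hst hmt.2⟩)
    linarith
  · rw [dif_neg ht]
    by_cases hs : (C.filter (fun c => s < c)).Nonempty
    · rw [dif_pos hs]
      have hms := Finset.mem_filter.mp (Finset.min'_mem _ hs)
      have : (C.filter (fun c => s < c)).min' hs ≤ t := by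
        by_contra hlt
        push_neg at hlt
        exact ht ⟨_, Finset.mem_filter.mpr ⟨hms.1, hlt⟩⟩
      linarith
    · rw [dif_neg hs]; linarith

noncomputable def RegPS (S : PersistentSet) (C : Finset ℝ) : PersistentSet where
  obj t := S.obj (nextHalf C t)
  map h x := S.map (nextHalf_mono C h) x
  map_id t x := S.map_id _ x
  map_comp h₁ h₂ x := S.map_comp _ _ x

lemma dense_of_null_compl {Z : Set ℝ} (hZ : MeasureTheory.volume Zᶜ = 0) {a b : ℝ}
    (hab : a < b) : ∃ u, u ∈ Z ∧ a < u ∧ u < b := by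
  by_contra h
  push_neg at h
  have hsub : Set.Ioo a b ⊆ Zᶜ := by
    intro x hx hxZ
    exact absurd (h x hxZ hx.1) (not_le.mpr hx.2)
  have h0 : MeasureTheory.volume (Set.Ioo a b) = 0 :=
    le_antisymm (hZ ▸ MeasureTheory.measure_mono hsub) zero_le
  rw [Real.volume_Ioo] at h0
  have := ENNReal.ofReal_eq_zero.mp h0
  linarith

/-- every abstract merge tree is a.e. isomorphic to a regular abstract merge
tree, unique up to natural isomorphism. -/
theorem exists_unique_regular_representative (S : PersistentSet)
    (hS : IsAbstractMergeTree S) :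
    (∃ R : PersistentSet, IsAbstractMergeTree R ∧ RegularPS R ∧ AEIso S R) ∧
    (∀ R R' : PersistentSet, IsAbstractMergeTree R → RegularPS R → AEIso S R →
      IsAbstractMergeTree R' → RegularPS R' → AEIso S R' → PSIso R R') := by
  obtain ⟨hfin, C, h1, h2, h3⟩ := hS
  constructor
  · refine ⟨RegPS S C, ⟨fun t => hfin _, C, ?_, ?_, ?_⟩, ?_, ?_⟩
    · intro t ht
      exact h1 _ (fun c hc => (nextHalf_spec C t hc).resolve_left (not_le.mpr (ht c hc)))
    · intro t ht
      exact h2 _ (fun c hc => lt_trans (ht c hc) (lt_nextHalf C t))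
    · intro s t h hcond
      apply h3
      intro c hc
      rcases hcond c hc with h' | h'
      · exact Or.inl (lt_trans h' (lt_nextHalf C s))
      · rcases nextHalf_spec C t hc with h'' | h''
        · exact absurd h' (not_lt.mpr h'')
        · exact Or.inr h''
    · -- regular
      intro t
      refine ⟨nextHalf C t - t, by linarith [lt_nextHalf C t], ?_⟩
      intro t' h ht'
      apply h3
      intro c hc
      rcases nextHalf_spec C t hc with h' | h'
      · exact Or.inl (lt_of_le_of_lt h' (lt_nextHalf C t))
      · refine Or.inr ?_
        rcases nextHalf_spec C t' hc with h'' | h''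
        · linarith
        · exact h''
    · -- AEIso
      refine ⟨(↑C : Set ℝ)ᶜ, C.finite_toSet.measurableSet.compl,
        by rw [compl_compl]; exact C.finite_toSet.measure_zero _,
        fun t ht => Equiv.ofBijective (S.map (lt_nextHalf C t).le)
          (h3 _ _ _ (fun c hc => by
            rcases nextHalf_spec C t hc with h' | h'
            · exact Or.inl (lt_of_le_of_ne h' (fun he => ht (he ▸ hc)))
            · exact Or.inr h')), ?_⟩
      intro s t hs ht h x
      show S.map _ (S.map h x) = S.map _ (S.map _ x)
      rw [S.map_comp, S.map_comp]
  · rintro R R' _ hRreg ⟨Z₁, hZ₁m, hZ₁0, α₁, hα₁⟩ _ hR'reg ⟨Z₂, hZ₂m, hZ₂0, α₂, hα₂⟩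
    classical
    have hZ0 : volume (Z₁ ∩ Z₂)ᶜ = 0 := by
      rw [Set.compl_inter]
      exact measure_union_null hZ₁0 hZ₂0
    have hβnat : ∀ (s t : ℝ) (hs : s ∈ Z₁ ∩ Z₂) (ht : t ∈ Z₁ ∩ Z₂) (h : s ≤ t) (x : R.obj s),
        α₂ t ht.2 ((α₁ t ht.1).symm (R.map h x))
          = R'.map h (α₂ s hs.2 ((α₁ s hs.1).symm x)) := by
      intro s t hs ht h x
      have hx : R.map h x = α₁ t ht.1 (S.map h ((α₁ s hs.1).symm x)) := by
        rw [hα₁ s t hs.1 ht.1 h ((α₁ s hs.1).symm x), Equiv.apply_symm_apply]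
      rw [hx, Equiv.symm_apply_apply, hα₂ s t hs.2 ht.2 h]
    choose ε₁ hε₁ hb₁ using hRreg
    choose ε₂ hε₂ hb₂ using hR'reg
    have hεpos : ∀ t : ℝ, 0 < min (ε₁ t) (ε₂ t) := fun t => lt_min (hε₁ t) (hε₂ t)
    have hdense : ∀ t : ℝ, ∃ v, v ∈ Z₁ ∩ Z₂ ∧ t < v ∧ v < t + min (ε₁ t) (ε₂ t) :=
      fun t => dense_of_null_compl hZ0 (by linarith [hεpos t])
    choose u huZ hult hulε using hdense
    have hbij₁ : ∀ t : ℝ, Function.Bijective (R.map (hult t).le) := fun t =>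
      hb₁ t (u t) (hult t).le
        (lt_of_lt_of_le (hulε t) (by linarith [min_le_left (ε₁ t) (ε₂ t)]))
    have hbij₂ : ∀ t : ℝ, Function.Bijective (R'.map (hult t).le) := fun t =>
      hb₂ t (u t) (hult t).le
        (lt_of_lt_of_le (hulε t) (by linarith [min_le_right (ε₁ t) (ε₂ t)]))
    set f : ∀ t : ℝ, R.obj t ≃ R'.obj t := fun t =>
      (Equiv.ofBijective _ (hbij₁ t)).trans
        (((α₁ (u t) (huZ t).1).symm.trans (α₂ (u t) (huZ t).2)).trans
          (Equiv.ofBijective _ (hbij₂ t)).symm) with hf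
    have hchar : ∀ (r : ℝ) (y : R.obj r),
        R'.map (hult r).le (f r y)
          = α₂ (u r) (huZ r).2 ((α₁ (u r) (huZ r).1).symm (R.map (hult r).le y)) := by
      intro r y
      exact Equiv.ofBijective_apply_symm_apply _ (hbij₂ r) _
    refine ⟨f, ?_⟩
    intro s t h x
    refine (hbij₂ t).injective ?_
    calc R'.map (hult t).le (f t (R.map h x))
        = α₂ (u t) (huZ t).2 ((α₁ (u t) (huZ t).1).symm
            (R.map (hult t).le (R.map h x))) := hchar t _
      _ = α₂ (u t) (huZ t).2 ((α₁ (u t) (huZ t).1).symm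
            (R.map (h.trans (hult t).le) x)) := by rw [R.map_comp]
      _ = R'.map (hult t).le (R'.map h (f s x)) := ?_
    rcases le_total (u s) (u t) with hc | hc
    · have e1 : R'.map (hult t).le (R'.map h (f s x))
          = R'.map hc (R'.map (hult s).le (f s x)) := by
        rw [R'.map_comp, R'.map_comp]
      rw [e1, hchar s x, ← hβnat (u s) (u t) (huZ s) (huZ t) hc, R.map_comp]
    · have hbijsut : Function.Bijective (R'.map (h.trans (hult t).le)) := by
        refine hb₂ s (u t) (h.trans (hult t).le) ?_
        have h1 := hulε s
        have h2 := min_le_right (ε₁ s) (ε₂ s)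
        have h3 := le_of_lt (lt_of_le_of_lt hc (hulε s))
        linarith [lt_of_le_of_lt hc (hulε s)]
      have hinj : Function.Injective (R'.map hc) := by
        intro a b hab
        obtain ⟨a', ha'⟩ := hbijsut.2 a
        obtain ⟨b', hb'⟩ := hbijsut.2 b
        have hcomp : R'.map hc (R'.map (h.trans (hult t).le) a')
            = R'.map hc (R'.map (h.trans (hult t).le) b') := by
          rw [ha', hb']
          exact hab
        rw [R'.map_comp, R'.map_comp] at hcomp
        have hab' : a' = b' := (hbij₂ s).injective hcomp
        rw [← ha', ← hb', hab']
      refine hinj ?_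
      rw [← hβnat (u t) (u s) (huZ t) (huZ s) hc, R.map_comp,
        R'.map_comp, R'.map_comp]
      exact (hchar s x).symm
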